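/- arXiv:1706.03334 — 8 statements merged into one kernel-verified Lean document; each statement's English description precedes it below -/
import Mathlib

section
/- For all real x with 0 < x ≤ 1 and p ∈ [-1,1] with p ≠ 0, one has ((x^p + 1)/2) · log x ≤ (x^p − 1)/p ≤ x^(p/2) · log x. -/
open Real

lemma sinh_le_mul_cosh (t : ℝ) (ht : 0 ≤ t) : Real.sinh t ≤ t * Real.cosh t := by
  have h : MonotoneOn (fun s : ℝ => s * Real.cosh s - Real.sinh s) (Set.Ici 0) := by
    apply monotoneOn_of_deriv_nonneg (convex_Ici 0)
    · exact ((continuous_id.mul Real.continuous_cosh).sub Real.continuous_sinh).continuousOn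
    · exact ((differentiable_id.mul Real.differentiable_cosh).sub
        Real.differentiable_sinh).differentiableOn
    · intro s hs
      have hd : HasDerivAt (fun s : ℝ => s * Real.cosh s - Real.sinh s)
          (1 * Real.cosh s + s * Real.sinh s - Real.cosh s) s :=
        ((hasDerivAt_id s).mul (Real.hasDerivAt_cosh s)).sub (Real.hasDerivAt_sinh s)
      rw [hd.deriv]
      rw [interior_Ici, Set.mem_Ioi] at hs
      have h1 : 0 ≤ Real.sinh s := Real.sinh_nonneg_iff.2 hs.le
      nlinarith
  have := h (Set.self_mem_Ici) (Set.mem_Ici.2 ht) ht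
  simpa using this

lemma key_pos (u : ℝ) (hu : 0 < u) :
    Real.exp (u / 2) ≤ (Real.exp u - 1) / u ∧
    (Real.exp u - 1) / u ≤ (Real.exp u + 1) / 2 := by
  set t := u / 2 with htdef
  have ht : 0 < t := by positivity
  have hs : Real.exp t > 0 := Real.exp_pos t
  have hsinh : t ≤ Real.sinh t := Real.self_le_sinh_iff.2 ht.le
  have hcosh : Real.sinh t ≤ t * Real.cosh t := sinh_le_mul_cosh t ht.le
  rw [Real.sinh_eq] at hsinh hcosh
  rw [Real.cosh_eq] at hcosh
  have hneg : Real.exp (-t) = 1 / Real.exp t := by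
    rw [Real.exp_neg]; ring
  rw [hneg] at hsinh hcosh
  have hexpu : Real.exp u = Real.exp t * Real.exp t := by
    rw [← Real.exp_add, htdef]; ring_nf
  have hss : 1 / Real.exp t * Real.exp t = 1 := by field_simp
  have hu2 : u = 2 * t := by rw [htdef]; ring
  constructor
  · rw [le_div_iff₀ hu, hexpu]
    nlinarith [mul_le_mul_of_nonneg_right hsinh hs.le, hss]
  · rw [div_le_div_iff₀ hu (by norm_num : (0:ℝ) < 2), hexpu]
    nlinarith [mul_le_mul_of_nonneg_right hcosh (le_of_lt hs), hss]

lemma key (u : ℝ) (hu : u ≠ 0) :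
    Real.exp (u / 2) ≤ (Real.exp u - 1) / u ∧
    (Real.exp u - 1) / u ≤ (Real.exp u + 1) / 2 := by
  rcases lt_or_gt_of_ne hu with h | h
  · have hv : 0 < -u := by linarith
    obtain ⟨h1, h2⟩ := key_pos (-u) hv
    have he : Real.exp (-u) = 1 / Real.exp u := by rw [Real.exp_neg]; ring
    have he2 : Real.exp (-u / 2) = 1 / Real.exp (u / 2) := by
      rw [show -u / 2 = -(u / 2) by ring, Real.exp_neg]; ring
    rw [he] at h1 h2
    rw [he2] at h1
    have hp1 : 0 < Real.exp u := Real.exp_pos u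
    have hp2 : 0 < Real.exp (u / 2) := Real.exp_pos _
    have hsq : Real.exp (u / 2) * Real.exp (u / 2) = Real.exp u := by
      rw [← Real.exp_add]; ring_nf
    have hwe : 1 / Real.exp u * Real.exp u = 1 := by field_simp
    have h3 : 1 / Real.exp u * (Real.exp (u / 2) * Real.exp (u / 2)) = 1 := by
      rw [hsq]; field_simp
    constructor
    · rw [le_div_iff_of_neg h]
      rw [div_le_div_iff₀ hp2 hv] at h1
      nlinarith [mul_le_mul_of_nonneg_right h1 hp2.le, h3, hsq]
    · rw [div_le_iff_of_neg h]
      rw [div_le_div_iff₀ hv (by norm_num : (0:ℝ) < 2)] at h2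
      nlinarith [mul_le_mul_of_nonneg_right h2 hp1.le, hwe]
  · exact key_pos u h

theorem stmt_1 (x p : ℝ) (hx0 : 0 < x) (hx1 : x ≤ 1)
    (hp : p ∈ Set.Icc (-1 : ℝ) 1) (hp0 : p ≠ 0) :
    ((x ^ p + 1) / 2) * Real.log x ≤ (x ^ p - 1) / p ∧
    (x ^ p - 1) / p ≤ x ^ (p / 2) * Real.log x := by
  rcases eq_or_lt_of_le hx1 with rfl | hx1'
  · simp [Real.one_rpow]
  · have hL : Real.log x < 0 := Real.log_neg hx0 hx1'
    set u := Real.log x * p with hudef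
    have hu : u ≠ 0 := mul_ne_zero (ne_of_lt hL) hp0
    have hxp : x ^ p = Real.exp u := Real.rpow_def_of_pos hx0 p
    have hxp2 : x ^ (p / 2) = Real.exp (u / 2) := by
      rw [Real.rpow_def_of_pos hx0, hudef]; ring_nf
    obtain ⟨h1, h2⟩ := key u hu
    have hmid : (Real.exp u - 1) / p = Real.log x * ((Real.exp u - 1) / u) := by
      rw [hudef, mul_div_assoc', mul_div_mul_left _ _ hL.ne]
    rw [hxp, hxp2, hmid]
    constructor
    · calc (Real.exp u + 1) / 2 * Real.log x
          = Real.log x * ((Real.exp u + 1) / 2) := by ring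
        _ ≤ Real.log x * ((Real.exp u - 1) / u) := by
            exact mul_le_mul_of_nonpos_left h2 hL.le
    · calc Real.log x * ((Real.exp u - 1) / u)
          ≤ Real.log x * Real.exp (u / 2) := mul_le_mul_of_nonpos_left h1 hL.le
        _ = Real.exp (u / 2) * Real.log x := by ring
end

section
/- Define for t ≥ 1 and p ∈ [-1,1], p ≠ 0, p ≠ 1: l_p(t) = (1/2)((t^p − 1)/p − (t^{p−1} − 1)/(p−1)) and k_p(t) = (4/p)(((t+1)/2)^p − 1) − (4/(p−1))(((t+1)/2)^{p−1} − 1). Then l_p(t) ≤ k_p(t) for all t ≥ 1. -/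
open Real

lemma aux_hasDerivAt (p x : ℝ) (hx : 0 < x) :
    HasDerivAt (fun t : ℝ =>
      (4 / p) * (((t + 1) / 2) ^ p - 1) - (4 / (p - 1)) * (((t + 1) / 2) ^ (p - 1) - 1) -
        (1 / 2) * ((t ^ p - 1) / p - (t ^ (p - 1) - 1) / (p - 1)))
      ((4 / p) * (1 / 2 * p * ((x + 1) / 2) ^ (p - 1)) -
        (4 / (p - 1)) * (1 / 2 * (p - 1) * ((x + 1) / 2) ^ (p - 2)) -
        (1 / 2) * ((p * x ^ (p - 1)) / p - ((p - 1) * x ^ (p - 2)) / (p - 1))) x := by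
  have hs : (0 : ℝ) < (x + 1) / 2 := by linarith
  have A : HasDerivAt (fun t : ℝ => (t + 1) / 2) (1 / 2) x :=
    ((hasDerivAt_id x).add_const 1).div_const 2
  have B : HasDerivAt (fun t : ℝ => ((t + 1) / 2) ^ p)
      (1 / 2 * p * ((x + 1) / 2) ^ (p - 1)) x := A.rpow_const (Or.inl hs.ne')
  have B' : HasDerivAt (fun t : ℝ => ((t + 1) / 2) ^ (p - 1))
      (1 / 2 * (p - 1) * ((x + 1) / 2) ^ (p - 1 - 1)) x := A.rpow_const (Or.inl hs.ne')
  have C : HasDerivAt (fun t : ℝ => t ^ p) (p * x ^ (p - 1)) x :=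
    Real.hasDerivAt_rpow_const (Or.inl hx.ne')
  have C' : HasDerivAt (fun t : ℝ => t ^ (p - 1)) ((p - 1) * x ^ (p - 1 - 1)) x :=
    Real.hasDerivAt_rpow_const (Or.inl hx.ne')
  have e : p - 1 - 1 = p - 2 := by ring
  rw [e] at B' C'
  exact (((B.sub_const 1).const_mul (4 / p)).sub
      ((B'.sub_const 1).const_mul (4 / (p - 1)))).sub
    ((((C.sub_const 1).div_const p).sub ((C'.sub_const 1).div_const (p - 1))).const_mul (1 / 2))

theorem stmt_4 (t p : ℝ) (ht : 1 ≤ t) (hp : p ∈ Set.Icc (-1 : ℝ) 1)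
    (hp0 : p ≠ 0) (hp1 : p ≠ 1) :
    (1 / 2) * ((t ^ p - 1) / p - (t ^ (p - 1) - 1) / (p - 1)) ≤
    (4 / p) * (((t + 1) / 2) ^ p - 1) - (4 / (p - 1)) * (((t + 1) / 2) ^ (p - 1) - 1) := by
  obtain ⟨hpl, hpu⟩ := hp
  have hp1' : p - 1 ≠ 0 := sub_ne_zero.mpr hp1
  set h : ℝ → ℝ := fun t =>
    (4 / p) * (((t + 1) / 2) ^ p - 1) - (4 / (p - 1)) * (((t + 1) / 2) ^ (p - 1) - 1) -
      (1 / 2) * ((t ^ p - 1) / p - (t ^ (p - 1) - 1) / (p - 1)) with hh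
  have key : ∀ x ∈ Set.Ici (1 : ℝ), HasDerivAt h _ x := fun x hx =>
    aux_hasDerivAt p x (lt_of_lt_of_le one_pos hx)
  have hdiff : ∀ x ∈ Set.Ici (1 : ℝ), DifferentiableAt ℝ h x := fun x hx =>
    (key x hx).differentiableAt
  have hmono : MonotoneOn h (Set.Ici 1) := by
    apply monotoneOn_of_deriv_nonneg (convex_Ici 1)
      (fun x hx => (hdiff x hx).continuousAt.continuousWithinAt)
      (fun x hx => (hdiff x (interior_subset hx)).differentiableWithinAt)
    intro x hx
    rw [interior_Ici] at hx
    have hx1 : (1 : ℝ) < x := hx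
    have hx0 : (0 : ℝ) < x := by linarith
    have hs0 : (0 : ℝ) < (x + 1) / 2 := by linarith
    rw [(key x hx1.le).deriv]
    have e1 : p - 1 = (p - 2) + 1 := by ring
    have es : ((x + 1) / 2) ^ (p - 1) = ((x + 1) / 2) ^ (p - 2) * ((x + 1) / 2) := by
      rw [e1, Real.rpow_add_one hs0.ne']
    have ex : x ^ (p - 1) = x ^ (p - 2) * x := by
      rw [e1, Real.rpow_add_one hx0.ne']
    have hle : x ^ (p - 2) ≤ ((x + 1) / 2) ^ (p - 2) :=
      Real.rpow_le_rpow_of_nonpos hs0 (by linarith) (by linarith)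
    have hbpos : (0 : ℝ) < x ^ (p - 2) := Real.rpow_pos_of_pos hx0 _
    rw [es, ex]
    have c1 : 4 / p * (1 / 2 * p * (((x + 1) / 2) ^ (p - 2) * ((x + 1) / 2))) =
        2 * ((x + 1) / 2) ^ (p - 2) * ((x + 1) / 2) := by field_simp; ring
    have c2 : 4 / (p - 1) * (1 / 2 * (p - 1) * ((x + 1) / 2) ^ (p - 2)) =
        2 * ((x + 1) / 2) ^ (p - 2) := by field_simp; ring
    have c3 : p * (x ^ (p - 2) * x) / p = x ^ (p - 2) * x := by field_simp
    have c4 : (p - 1) * x ^ (p - 2) / (p - 1) = x ^ (p - 2) := by field_simp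
    rw [c1, c2, c3, c4]
    nlinarith [mul_le_mul_of_nonneg_left hle (by linarith : (0:ℝ) ≤ x - 1), hbpos,
      mul_pos hbpos (by linarith : (0:ℝ) < x - 1)]
  have h1 : h 1 = 0 := by
    simp [hh, Real.one_rpow]
  have := hmono (Set.self_mem_Ici) (Set.mem_Ici.mpr ht) ht
  rw [h1] at this
  simp only [hh] at this
  linarith
end

section
/- Define for t ≥ 1 and p ∈ (0,1): k_p(t) = (4/p)(((t+1)/2)^p − 1) − (4/(p−1))(((t+1)/2)^{p−1} − 1) and c_p(t) = (t^p − 1)/(p(p−1)) − (t−1)/(p−1). Then k_p(t) ≤ c_p(t). -/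
open Real Set

/-- Bernoulli's inequality for nonpositive exponents. -/
lemma bern_aux {x q : ℝ} (hx : 0 < x) (hq : q ≤ 0) : 1 + q * (x - 1) ≤ x ^ q := by
  rw [Real.rpow_def_of_pos hx]
  have h1 : q * Real.log x + 1 ≤ Real.exp (Real.log x * q) := by
    rw [mul_comm]; exact Real.add_one_le_exp _
  have h2 : Real.log x ≤ x - 1 := Real.log_le_sub_one_of_pos hx
  have h3 : q * (x - 1) ≤ q * Real.log x := mul_le_mul_of_nonpos_left h2 hq
  linarith

lemma hasDerivA (r t : ℝ) (ht : 1 ≤ t) :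
    HasDerivAt (fun s : ℝ => ((s + 1) / 2) ^ r) (r * ((t + 1) / 2) ^ (r - 1) / 2) t := by
  have hA : (t + 1) / 2 ≠ 0 := by positivity
  have h1 : HasDerivAt (fun s : ℝ => (s + 1) / 2) (1 / 2) t := by
    simpa using ((hasDerivAt_id t).add_const 1).div_const 2
  have := (Real.hasDerivAt_rpow_const (x := (t + 1) / 2) (p := r) (Or.inl hA)).comp t h1
  refine this.congr_deriv ?_
  ring

/-- Tangent line inequality: t^q ≥ A^q + q A^{q-1} (t - A) for A = (t+1)/2. -/
lemma tangent_aux {t q : ℝ} (ht : 1 ≤ t) (hq : q ≤ 0) :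
    ((t + 1) / 2) ^ q + q * ((t + 1) / 2) ^ (q - 1) * (t - (t + 1) / 2) ≤ t ^ q := by
  set A : ℝ := (t + 1) / 2 with hA
  have hApos : 0 < A := by positivity
  have htpos : 0 < t := by linarith
  have hx : 0 < t / A := by positivity
  have hb := bern_aux hx hq
  have hdiv : (t / A) ^ q = t ^ q / A ^ q := Real.div_rpow htpos.le hApos.le q
  rw [hdiv] at hb
  have hAq : 0 < A ^ q := Real.rpow_pos_of_pos hApos q
  have hsub : A ^ (q - 1) = A ^ q / A := Real.rpow_sub_one hApos.ne' q
  rw [hsub]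
  have := mul_le_mul_of_nonneg_right hb hAq.le
  rw [div_mul_cancel₀ _ hAq.ne'] at this
  have hexp : (1 + q * (t / A - 1)) * A ^ q = A ^ q + q * (A ^ q / A) * (t - A) := by
    field_simp
  linarith [hexp ▸ this]

/-- Integrated Hermite–Hadamard: (t-1) ((t+1)/2)^{p-2} ≤ (t^{p-1} - 1)/(p-1). -/
lemma hh_aux {p : ℝ} (hp0 : 0 < p) (hp1 : p < 1) {t : ℝ} (ht : 1 ≤ t) :
    (t - 1) * ((t + 1) / 2) ^ (p - 2) ≤ (t ^ (p - 1) - 1) / (p - 1) := by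
  set h : ℝ → ℝ := fun s => (s ^ (p - 1) - 1) / (p - 1) - (s - 1) * ((s + 1) / 2) ^ (p - 2)
    with hh
  have hderiv : ∀ s ∈ Ici (1 : ℝ), HasDerivAt h
      (s ^ (p - 2) - (((s + 1) / 2) ^ (p - 2)
        + (s - 1) * ((p - 2) * ((s + 1) / 2) ^ (p - 2 - 1) / 2))) s := by
    intro s hs
    have hs1 : (1 : ℝ) ≤ s := hs
    have hsne : s ≠ 0 := by positivity
    have h1 : HasDerivAt (fun x : ℝ => (x ^ (p - 1) - 1) / (p - 1))
        ((p - 1) * s ^ (p - 1 - 1) / (p - 1)) s := by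
      exact (((Real.hasDerivAt_rpow_const (Or.inl hsne)).sub_const 1).div_const (p - 1))
    have h2 : HasDerivAt (fun x : ℝ => (x - 1) * ((x + 1) / 2) ^ (p - 2))
        (1 * ((s + 1) / 2) ^ (p - 2) + (s - 1) * ((p - 2) * ((s + 1) / 2) ^ (p - 2 - 1) / 2))
        s := ((hasDerivAt_id s).sub_const 1).mul (hasDerivA (p - 2) s hs1)
    have := h1.sub h2
    refine this.congr_deriv ?_
    rw [show p - 1 - 1 = p - 2 by ring, mul_comm (p - 1) (s ^ (p - 2)), mul_div_cancel_right₀ _ (by linarith : p - 1 ≠ 0)]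
    ring
  have hmono : MonotoneOn h (Ici (1 : ℝ)) := by
    apply monotoneOn_of_deriv_nonneg (convex_Ici 1)
    · exact fun s hs => (hderiv s hs).continuousAt.continuousWithinAt
    · intro s hs
      rw [interior_Ici] at hs
      exact (hderiv s (mem_Ici.mpr (le_of_lt hs))).differentiableAt.differentiableWithinAt
    · intro s hs
      rw [interior_Ici] at hs
      have hs1 : (1 : ℝ) ≤ s := le_of_lt hs
      rw [(hderiv s hs1).deriv]
      have htan := tangent_aux hs1 (by linarith : p - 2 ≤ 0)
      have : s - (s + 1) / 2 = (s - 1) / 2 := by ring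
      rw [this] at htan
      have : (p - 2) * ((s + 1) / 2) ^ (p - 2 - 1) * ((s - 1) / 2)
          = (s - 1) * ((p - 2) * ((s + 1) / 2) ^ (p - 2 - 1) / 2) := by ring
      linarith [this ▸ htan]
  have h1 : h 1 = 0 := by
    simp [hh, Real.one_rpow]
  have := hmono (mem_Ici.mpr le_rfl) (mem_Ici.mpr ht) ht
  rw [h1] at this
  simpa [hh, sub_nonneg] using this

theorem stmt_5 (t p : ℝ) (ht : 1 ≤ t) (hp0 : 0 < p) (hp1 : p < 1) :
    (4 / p) * (((t + 1) / 2) ^ p - 1) - (4 / (p - 1)) * (((t + 1) / 2) ^ (p - 1) - 1) ≤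
    (t ^ p - 1) / (p * (p - 1)) - (t - 1) / (p - 1) := by
  set F : ℝ → ℝ := fun s => (s ^ p - 1) / (p * (p - 1)) - (s - 1) / (p - 1)
      - ((4 / p) * (((s + 1) / 2) ^ p - 1) - (4 / (p - 1)) * (((s + 1) / 2) ^ (p - 1) - 1))
    with hF
  have hpne : p ≠ 0 := ne_of_gt hp0
  have hp1ne : p - 1 ≠ 0 := by linarith
  have hderiv : ∀ s ∈ Ici (1 : ℝ), HasDerivAt F
      ((s ^ (p - 1) - 1) / (p - 1) - (2 * ((s + 1) / 2) ^ (p - 1)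
        - 2 * ((s + 1) / 2) ^ (p - 1 - 1))) s := by
    intro s hs
    have hs1 : (1 : ℝ) ≤ s := hs
    have hsne : s ≠ 0 := by positivity
    have h1 : HasDerivAt (fun x : ℝ => (x ^ p - 1) / (p * (p - 1)))
        (p * s ^ (p - 1) / (p * (p - 1))) s :=
      ((Real.hasDerivAt_rpow_const (Or.inl hsne)).sub_const 1).div_const (p * (p - 1))
    have h2 : HasDerivAt (fun x : ℝ => (x - 1) / (p - 1)) (1 / (p - 1)) s :=
      (((hasDerivAt_id s).sub_const 1)).div_const (p - 1)
    have h3 : HasDerivAt (fun x : ℝ => (4 / p) * (((x + 1) / 2) ^ p - 1))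
        ((4 / p) * (p * ((s + 1) / 2) ^ (p - 1) / 2)) s :=
      (((hasDerivA p s hs1).sub_const 1)).const_mul (4 / p)
    have h4 : HasDerivAt (fun x : ℝ => (4 / (p - 1)) * (((x + 1) / 2) ^ (p - 1) - 1))
        ((4 / (p - 1)) * ((p - 1) * ((s + 1) / 2) ^ (p - 1 - 1) / 2)) s :=
      (((hasDerivA (p - 1) s hs1).sub_const 1)).const_mul (4 / (p - 1))
    have := (h1.sub h2).sub (h3.sub h4)
    refine this.congr_deriv ?_
    field_simp
    ring
  have hmono : MonotoneOn F (Ici (1 : ℝ)) := by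
    apply monotoneOn_of_deriv_nonneg (convex_Ici 1)
    · exact fun s hs => (hderiv s hs).continuousAt.continuousWithinAt
    · intro s hs
      rw [interior_Ici] at hs
      exact (hderiv s (mem_Ici.mpr (le_of_lt hs))).differentiableAt.differentiableWithinAt
    · intro s hs
      rw [interior_Ici] at hs
      have hs1 : (1 : ℝ) ≤ s := le_of_lt hs
      rw [(hderiv s hs1).deriv]
      have hhh := hh_aux hp0 hp1 hs1
      have hApos : (0 : ℝ) < (s + 1) / 2 := by positivity
      have hfac : 2 * ((s + 1) / 2) ^ (p - 1) - 2 * ((s + 1) / 2) ^ (p - 1 - 1)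
          = (s - 1) * ((s + 1) / 2) ^ (p - 2) := by
        have e1 : ((s + 1) / 2) ^ (p - 1) = ((s + 1) / 2) ^ (p - 2) * ((s + 1) / 2) := by
          rw [← Real.rpow_add_one hApos.ne' (p - 2)]
          ring_nf
        have e2 : p - 1 - 1 = p - 2 := by ring
        rw [e1, e2]
        ring
      rw [hfac]
      linarith
  have h1 : F 1 = 0 := by
    simp [hF, Real.one_rpow]
  have := hmono (mem_Ici.mpr le_rfl) (mem_Ici.mpr ht) ht
  rw [h1] at this
  have := sub_nonneg.mp this
  linarith [this]
end

section
/- Define for t ≥ 1 and p ∈ (0,1): c_p(t) = (t^p − 1)/(p(p−1)) − (t−1)/(p−1) and l_p(t) = (1/2)((t^p − 1)/p − (t^{p−1} − 1)/(p−1)). Then c_p(t) ≤ l_p(t) + (t−1)²/4. -/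
open Set

private lemma mono_aux (f f' : ℝ → ℝ)
    (hd : ∀ x, 1 ≤ x → HasDerivAt f (f' x) x)
    (h0 : ∀ x, 1 ≤ x → 0 ≤ f' x) :
    ∀ t, 1 ≤ t → f 1 ≤ f t := by
  intro t ht
  have hmono : MonotoneOn f (Set.Ici 1) :=
    monotoneOn_of_deriv_nonneg (convex_Ici 1)
      (fun x hx => (hd x hx).continuousAt.continuousWithinAt)
      (fun x hx => by
        have hx1 : 1 ≤ x := le_of_lt (by simpa using hx)
        exact (hd x hx1).differentiableAt.differentiableWithinAt)
      (fun x hx => by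
        have hx1 : 1 ≤ x := le_of_lt (by simpa using hx)
        rw [(hd x hx1).deriv]; exact h0 x hx1)
  exact hmono (by simp) (by simpa using ht) ht

private lemma hh_step {p : ℝ} (hp0 : 0 < p) (hp1 : p < 1) {x : ℝ} (hx : 1 ≤ x) :
    (x ^ (p - 1) - 1) / (p - 1) ≤ (x - 1) * (x ^ (p - 2) + 1) / 2 := by
  set g : ℝ → ℝ := fun x => (x - 1) * (x ^ (p - 2) + 1) / 2 - (x ^ (p - 1) - 1) / (p - 1)
    with hg
  have key : ∀ y, 1 ≤ y → g 1 ≤ g y := by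
    apply mono_aux g
      (fun y => (1 * (y ^ (p - 2) + 1) + (y - 1) * ((p - 2) * y ^ (p - 2 - 1))) / 2
        - (p - 1) * y ^ (p - 1 - 1) / (p - 1))
    · intro y hy
      have hy0 : y ≠ 0 := by positivity
      have d1 : HasDerivAt (fun y : ℝ => (y - 1) * (y ^ (p - 2) + 1) / 2)
          ((1 * (y ^ (p - 2) + 1) + (y - 1) * ((p - 2) * y ^ (p - 2 - 1))) / 2) y := by
        exact (((hasDerivAt_id y).sub_const 1).mul
          ((Real.hasDerivAt_rpow_const (Or.inl hy0)).add_const 1)).div_const 2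
      have d2 : HasDerivAt (fun y : ℝ => (y ^ (p - 1) - 1) / (p - 1))
          ((p - 1) * y ^ (p - 1 - 1) / (p - 1)) y := by
        exact ((Real.hasDerivAt_rpow_const (Or.inl hy0)).sub_const 1).div_const (p - 1)
      exact d1.sub d2
    · intro y hy
      have hy0 : (0:ℝ) < y := by linarith
      have hber : 1 + (3 - p) * (y - 1) ≤ y ^ (3 - p) := by
        have := one_add_mul_self_le_rpow_one_add (s := y - 1) (by linarith) (p := 3 - p)
          (by linarith)
        simpa [show 1 + (y - 1) = y by ring] using this
      have hpos : (0:ℝ) < y ^ (p - 3) := Real.rpow_pos_of_pos hy0 _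
      have hinv : y ^ (3 - p) * y ^ (p - 3) = 1 := by
        rw [← Real.rpow_add hy0]; norm_num
      have h22 : y ^ (p - 2 - 1) = y ^ (p - 3) := by congr 1; ring
      have h21 : y ^ (p - 2) = y ^ (p - 3) * y := by
        rw [← Real.rpow_add_one (ne_of_gt hy0)]; congr 1; ring
      have h11 : y ^ (p - 1 - 1) = y ^ (p - 2) := by congr 1; ring
      rw [h22, h11, h21]
      have hp1' : p - 1 ≠ 0 := by intro h; apply absurd hp1; linarith [sub_eq_zero.mp h]
      have e : (p - 1) * (y ^ (p - 3) * y) / (p - 1) = y ^ (p - 3) * y := by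
        field_simp
      have hb2 : (1 + (3 - p) * (y - 1)) * y ^ (p - 3) ≤ y ^ (3 - p) * y ^ (p - 3) :=
        mul_le_mul_of_nonneg_right hber (le_of_lt hpos)
      rw [hinv] at hb2
      rw [e]
      nlinarith [hb2]
  have h1 : g 1 = 0 := by simp [hg]
  have := key x hx
  rw [h1] at this
  simpa [hg, sub_nonneg] using this

theorem stmt_6 (t p : ℝ) (ht : 1 ≤ t) (hp0 : 0 < p) (hp1 : p < 1) :
    (t ^ p - 1) / (p * (p - 1)) - (t - 1) / (p - 1) ≤
    (1 / 2) * ((t ^ p - 1) / p - (t ^ (p - 1) - 1) / (p - 1)) + (t - 1) ^ 2 / 4 := by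
  set F : ℝ → ℝ := fun t =>
    (1 / 2) * ((t ^ p - 1) / p - (t ^ (p - 1) - 1) / (p - 1)) + (t - 1) ^ 2 / 4
      - ((t ^ p - 1) / (p * (p - 1)) - (t - 1) / (p - 1)) with hF
  have hp1' : p - 1 ≠ 0 := by intro h; apply absurd hp1; linarith [sub_eq_zero.mp h]
  have hpne : p ≠ 0 := ne_of_gt hp0
  have key : ∀ s, 1 ≤ s → F 1 ≤ F s := by
    apply mono_aux F (fun s =>
      (1 / 2) * (p * s ^ (p - 1) / p - (p - 1) * s ^ (p - 1 - 1) / (p - 1))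
        + 2 * (s - 1) / 4 - (p * s ^ (p - 1) / (p * (p - 1)) - 1 / (p - 1)))
    · intro s hs
      have hs0 : s ≠ 0 := by positivity
      have dpow : HasDerivAt (fun s : ℝ => s ^ p) (p * s ^ (p - 1)) s :=
        Real.hasDerivAt_rpow_const (Or.inl hs0)
      have dpow1 : HasDerivAt (fun s : ℝ => s ^ (p - 1)) ((p - 1) * s ^ (p - 1 - 1)) s :=
        Real.hasDerivAt_rpow_const (Or.inl hs0)
      have dsq : HasDerivAt (fun s : ℝ => (s - 1) ^ 2) (2 * (s - 1)) s := by
        have := (((hasDerivAt_id s).sub_const 1).pow 2)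
        simpa [Pi.pow_def] using this
      exact ((((((dpow.sub_const 1).div_const p).sub
        ((dpow1.sub_const 1).div_const (p - 1))).const_mul (1/2)).add
        (dsq.div_const 4)).sub
        (((dpow.sub_const 1).div_const (p * (p - 1))).sub
          (((hasDerivAt_id s).sub_const 1).div_const (p - 1))))
    · intro s hs
      have hhh := hh_step hp0 hp1 hs
      have hs0 : (0:ℝ) < s := by linarith
      have h11 : s ^ (p - 1 - 1) = s ^ (p - 2) := by congr 1; ring
      have hsp : s ^ (p - 1) = s * s ^ (p - 2) := by
        rw [mul_comm, ← Real.rpow_add_one (ne_of_gt hs0)]; congr 1; ring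
      rw [h11]
      have e1 : p * (s ^ (p - 1) / p) = s ^ (p - 1) := by field_simp
      have e2 : (p - 1) * s ^ (p - 2) / (p - 1) = s ^ (p - 2) := by field_simp
      have e3 : p * s ^ (p - 1) / (p * (p - 1)) - 1 / (p - 1)
          = (s ^ (p - 1) - 1) / (p - 1) := by field_simp
      have e4 : (s - 1) * (s ^ (p - 2) + 1) / 2
          = (s - 1) * s ^ (p - 2) / 2 + (s - 1) / 2 := by ring
      rw [mul_div_assoc p, e1, e2]
      rw [sub_sub, show p * s ^ (p - 1) / (p * (p - 1)) - 1 / (p - 1)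
        = (s ^ (p - 1) - 1) / (p - 1) from e3] at *
      rw [e4] at hhh
      nlinarith [hhh, hsp]
  have h1 : F 1 = 0 := by simp [hF]
  have := key t ht
  rw [h1] at this
  simp only [hF] at this
  linarith
end

section
/- Let c ∈ ℝ and g(x) = 1 − x + x·log x − c·x·(log x)² for x > 0. Then g(x) ≥ 0 if (a) 0 < x ≤ 1 and 0 < c ≤ 1/2, or (b) 1 ≤ x ≤ exp((1−2c)/c) and 0 < c ≤ 1/2, or (c) x > 0 and c ≤ 0. Also g(x) ≤ 0 if (d) exp((1−2c)/c) ≤ x ≤ 1 and c ≥ 1/2, or (e) x ≥ 1 and c ≥ 1/2. -/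
open Real

private lemma hderiv (c t : ℝ) :
    HasDerivAt (fun t => Real.exp t * (1 - t + c * t ^ 2))
      (Real.exp t * (t * (c * t + 2 * c - 1))) t := by
  have h1 : HasDerivAt (fun t : ℝ => 1 - t + c * t ^ 2) (-1 + c * (2 * t)) t := by
    have := ((hasDerivAt_pow 2 t).const_mul c)
    have h2 : HasDerivAt (fun t : ℝ => 1 - t) (-1) t := by
      simpa using (hasDerivAt_id t).const_sub 1 |>.neg.neg
    exact h2.add (by simpa using this)
  have : HasDerivAt (fun t => Real.exp t * (1 - t + c * t ^ 2))
      (Real.exp t * (1 - t + c * t ^ 2) + Real.exp t * (-1 + c * (2 * t))) t :=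
    (Real.hasDerivAt_exp t).mul h1
  convert this using 1
  ring

private lemma anti (c a b : ℝ) (hc : 0 < c)
    (hsign : ∀ t ∈ Set.Ioo a b, t * (c * t + 2 * c - 1) ≤ 0) :
    AntitoneOn (fun t => Real.exp t * (1 - t + c * t ^ 2)) (Set.Icc a b) := by
  apply antitoneOn_of_deriv_nonpos (convex_Icc a b)
  · exact Continuous.continuousOn (by continuity)
  · intro t ht
    exact (hderiv c t).differentiableAt.differentiableWithinAt
  · intro t ht
    rw [interior_Icc] at ht
    rw [(hderiv c t).deriv]
    have := hsign t ht
    nlinarith [Real.exp_pos t]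

theorem stmt_11 (c x : ℝ) (hx : 0 < x) :
    (((x ≤ 1 ∧ 0 < c ∧ c ≤ 1 / 2) ∨
      (1 ≤ x ∧ x ≤ Real.exp ((1 - 2 * c) / c) ∧ 0 < c ∧ c ≤ 1 / 2) ∨
      c ≤ 0) →
      0 ≤ 1 - x + x * Real.log x - c * x * (Real.log x) ^ 2) ∧
    (((Real.exp ((1 - 2 * c) / c) ≤ x ∧ x ≤ 1 ∧ 1 / 2 ≤ c) ∨
      (1 ≤ x ∧ 1 / 2 ≤ c)) →
      1 - x + x * Real.log x - c * x * (Real.log x) ^ 2 ≤ 0) := by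
  set t := Real.log x with ht
  have hxe : x = Real.exp t := (Real.exp_log hx).symm
  constructor
  · rintro (⟨hx1, hc0, hc2⟩ | ⟨hx1, hx2, hc0, hc2⟩ | hc0)
    · -- x ≤ 1, 0 < c ≤ 1/2 : t ≤ 0
      have htle : t ≤ 0 := Real.log_nonpos hx.le hx1
      have hq := Real.quadratic_le_exp_of_nonneg (x := -t) (by linarith)
      rw [hxe] at *
      have he : Real.exp t * Real.exp (-t) = 1 := by
        rw [← Real.exp_add]; simp
      nlinarith [Real.exp_pos t, sq_nonneg t, mul_nonneg (Real.exp_pos t).le (sq_nonneg t)]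
    · -- 1 ≤ x ≤ exp((1-2c)/c)
      set M := (1 - 2 * c) / c with hM
      have hM0 : 0 ≤ M := div_nonneg (by linarith) hc0.le
      have ht0 : 0 ≤ t := Real.log_nonneg hx1
      have htM : t ≤ M := by
        rw [ht]; calc Real.log x ≤ Real.log (Real.exp M) := Real.log_le_log hx hx2
          _ = M := Real.log_exp M
      have ha := anti c 0 M hc0 (fun s hs => by
        have hcs : c * s + 2 * c - 1 ≤ 0 := by
          have : c * s ≤ c * M := by nlinarith [hs.2]
          have : c * M = 1 - 2 * c := by rw [hM]; field_simp
          nlinarith [hs.2, mul_le_mul_of_nonneg_left hs.2.le hc0.le]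
        nlinarith [hs.1])
      have := ha (Set.left_mem_Icc.mpr hM0) (Set.mem_Icc.mpr ⟨ht0, htM⟩) ht0
      simp only [Real.exp_zero] at this
      rw [hxe]; nlinarith
    · -- c ≤ 0
      have h1 : Real.log x ≤ x - 1 := Real.log_le_sub_one_of_pos hx
      have h2 : Real.log x⁻¹ ≤ x⁻¹ - 1 := Real.log_le_sub_one_of_pos (by positivity)
      rw [Real.log_inv] at h2
      have hx' : x * (x⁻¹ - 1) = 1 - x := by field_simp
      have : 1 - x + x * t ≥ 0 := by
        have := mul_le_mul_of_nonneg_left h2 hx.le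
        rw [hx'] at this; nlinarith
      nlinarith [mul_nonneg hx.le (sq_nonneg t)]
  · rintro (⟨hx2, hx1, hc⟩ | ⟨hx1, hc⟩)
    · -- exp M ≤ x ≤ 1, c ≥ 1/2
      set M := (1 - 2 * c) / c with hM
      have hc0 : 0 < c := by linarith
      have hM0 : M ≤ 0 := div_nonpos_of_nonpos_of_nonneg (by linarith) hc0.le
      have ht0 : t ≤ 0 := Real.log_nonpos hx.le hx1
      have htM : M ≤ t := by
        rw [ht]; calc M = Real.log (Real.exp M) := (Real.log_exp M).symm
          _ ≤ Real.log x := Real.log_le_log (Real.exp_pos M) hx2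
      have ha := anti c M 0 hc0 (fun s hs => by
        have hcM : c * M = 1 - 2 * c := by rw [hM]; field_simp
        have : c * s + 2 * c - 1 ≥ 0 := by nlinarith [hs.1]
        nlinarith [hs.2])
      have := ha (Set.mem_Icc.mpr ⟨htM, ht0⟩) (Set.right_mem_Icc.mpr hM0) ht0
      simp only [Real.exp_zero] at this
      rw [hxe]; nlinarith
    · -- x ≥ 1, c ≥ 1/2
      have ht0 : 0 ≤ t := Real.log_nonneg hx1
      have hq := Real.quadratic_le_exp_of_nonneg ht0
      rw [hxe]
      nlinarith [Real.exp_pos t, sq_nonneg t, sq_nonneg (t ^ 2), mul_nonneg (sub_nonneg.mpr hc) (sq_nonneg t), mul_nonneg (mul_nonneg (sub_nonneg.mpr hc) (sq_nonneg t)) (Real.exp_pos t).le]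
end

section
/- For 0 < x ≤ 1 and 0 < p ≤ q < 1, one has ((1−p) + px − x^p)/(p(1−p)) ≥ ((1−q) + qx − x^q)/(q(1−q)). For x ≥ 1 the reversed inequality holds. -/
open intervalIntegral Real

/-- slope monotonicity of exp from 0 -/
lemma exp_slope_mono {u v : ℝ} (hu : u ≠ 0) (hv : v ≠ 0) (huv : u ≤ v) :
    (Real.exp u - 1) / u ≤ (Real.exp v - 1) / v := by
  have := convexOn_exp.secant_mono (a := 0) (x := u) (y := v) trivial trivial trivial hu hv huv
  simpa using this

/-- key pointwise inequality -/
lemma key_s15 (t p q : ℝ) (ht : 0 < t) (hp : 0 < p) (hpq : p ≤ q) (hq : q < 1) :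
    (t ^ (q - 1) - 1) / (1 - q) ≤ (t ^ (p - 1) - 1) / (1 - p) := by
  have hp1 : p < 1 := lt_of_le_of_lt hpq hq
  have h1p : (0:ℝ) < 1 - p := by linarith
  have h1q : (0:ℝ) < 1 - q := by linarith
  set s := Real.log t with hs
  have hrp : t ^ (p - 1) = Real.exp ((p - 1) * s) := by
    rw [Real.rpow_def_of_pos ht, hs]; ring_nf
  have hrq : t ^ (q - 1) = Real.exp ((q - 1) * s) := by
    rw [Real.rpow_def_of_pos ht, hs]; ring_nf
  rw [hrp, hrq]
  rcases lt_trichotomy s 0 with hsn | hs0 | hsp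
  · -- s < 0 : u = (p-1)*s > 0, v = (q-1)*s > 0, v ≤ u
    have hu : (0:ℝ) < (p - 1) * s := mul_pos_of_neg_of_neg (by linarith) hsn
    have hv : (0:ℝ) < (q - 1) * s := mul_pos_of_neg_of_neg (by linarith) hsn
    have hvu : (q - 1) * s ≤ (p - 1) * s := by nlinarith
    have h := exp_slope_mono (ne_of_gt hv) (ne_of_gt hu) hvu
    rw [div_le_div_iff₀ h1q h1p]
    rw [div_le_div_iff₀ hv hu] at h
    nlinarith [Real.exp_pos ((p-1)*s), Real.exp_pos ((q-1)*s)]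
  · simp [hs0]
  · -- s > 0 : u = (p-1)*s < 0, v = (q-1)*s < 0, u ≤ v
    have hu : (p - 1) * s < 0 := mul_neg_of_neg_of_pos (by linarith) hsp
    have hv : (q - 1) * s < 0 := mul_neg_of_neg_of_pos (by linarith) hsp
    have huv : (p - 1) * s ≤ (q - 1) * s := by nlinarith
    have h := exp_slope_mono (ne_of_lt hu) (ne_of_lt hv) huv
    have h' : (1 - Real.exp ((p-1)*s)) / (-((p-1)*s)) ≤
        (1 - Real.exp ((q-1)*s)) / (-((q-1)*s)) := by
      rw [show (1 - Real.exp ((p-1)*s)) = -(Real.exp ((p-1)*s) - 1) by ring,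
        show (1 - Real.exp ((q-1)*s)) = -(Real.exp ((q-1)*s) - 1) by ring,
        neg_div_neg_eq, neg_div_neg_eq]
      exact h
    rw [div_le_div_iff₀ (by linarith) (by linarith)] at h'
    rw [div_le_div_iff₀ h1q h1p]
    nlinarith [h']

/-- integral representation -/
lemma Fval (x p : ℝ) (hp : 0 < p) (hp1 : p < 1) :
    ∫ t in x..(1:ℝ), (t ^ (p - 1) - 1) / (1 - p)
      = ((1 - p) + p * x - x ^ p) / (p * (1 - p)) := by
  have h1p : (1:ℝ) - p ≠ 0 := by linarith
  have hint : IntervalIntegrable (fun t : ℝ => t ^ (p - 1)) MeasureTheory.volume x 1 :=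
    intervalIntegral.intervalIntegrable_rpow' (by linarith)
  have hint1 : IntervalIntegrable (fun _ : ℝ => (1:ℝ)) MeasureTheory.volume x 1 :=
    intervalIntegrable_const
  have hsub : ∫ t in x..(1:ℝ), (t ^ (p - 1) - 1) / (1 - p)
      = ((∫ t in x..(1:ℝ), t ^ (p - 1)) - ∫ t in x..(1:ℝ), (1:ℝ)) / (1 - p) := by
    rw [← intervalIntegral.integral_sub hint hint1, ← intervalIntegral.integral_div]
  rw [hsub, integral_rpow (Or.inl (by linarith)), intervalIntegral.integral_const]
  have : p - 1 + 1 = p := by ring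
  rw [this, Real.one_rpow]
  field_simp
  ring

theorem stmt_15 (x p q : ℝ) (hp : 0 < p) (hpq : p ≤ q) (hq : q < 1) :
    (0 < x → x ≤ 1 →
      ((1 - q) + q * x - x ^ q) / (q * (1 - q)) ≤
        ((1 - p) + p * x - x ^ p) / (p * (1 - p))) ∧
    (1 ≤ x →
      ((1 - p) + p * x - x ^ p) / (p * (1 - p)) ≤
        ((1 - q) + q * x - x ^ q) / (q * (1 - q))) := by
  have hp1 : p < 1 := lt_of_le_of_lt hpq hq
  have hq0 : 0 < q := lt_of_lt_of_le hp hpq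
  have hintp : ∀ a b : ℝ, IntervalIntegrable
      (fun t : ℝ => (t ^ (p - 1) - 1) / (1 - p)) MeasureTheory.volume a b := by
    intro a b
    exact ((intervalIntegral.intervalIntegrable_rpow' (by linarith : (-1:ℝ) < p - 1)).sub
      intervalIntegrable_const).div_const _
  have hintq : ∀ a b : ℝ, IntervalIntegrable
      (fun t : ℝ => (t ^ (q - 1) - 1) / (1 - q)) MeasureTheory.volume a b := by
    intro a b
    exact ((intervalIntegral.intervalIntegrable_rpow' (by linarith : (-1:ℝ) < q - 1)).sub
      intervalIntegrable_const).div_const _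
  constructor
  · intro hx0 hx1
    rw [← Fval x p hp hp1, ← Fval x q hq0 hq]
    exact intervalIntegral.integral_mono_on hx1 (hintq x 1) (hintp x 1)
      (fun t ht => key_s15 t p q (lt_of_lt_of_le hx0 ht.1) hp hpq hq)
  · intro hx1
    rw [← Fval x p hp hp1, ← Fval x q hq0 hq,
      intervalIntegral.integral_symm 1 x, intervalIntegral.integral_symm 1 x,
      neg_le_neg_iff]
    exact intervalIntegral.integral_mono_on hx1 (hintq 1 x) (hintp 1 x)
      (fun t ht => key_s15 t p q (lt_of_lt_of_le one_pos ht.1) hp hpq hq)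
end

section
/- For 0 < x ≤ 1 and 0 < p ≤ q ≤ 1, one has (1/p)·(x^p − x/((1−p)x + p)) ≥ (1/q)·(x^q − x/((1−q)x + q)). -/
open Real

lemma exp_secant {a b : ℝ} (ha : 0 < a) (hab : a ≤ b) :
    (Real.exp a - 1) / a ≤ (Real.exp b - 1) / b := by
  have := convexOn_exp.secant_mono (a := 0) (x := a) (y := b) trivial trivial trivial
    (ne_of_gt ha) (ne_of_gt (lt_of_lt_of_le ha hab)) hab
  simpa using this

lemma g_mono {t p q : ℝ} (ht : 0 ≤ t) (hp : 0 < p) (hpq : p ≤ q) :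
    (Real.exp (p * t) - 1) / p ≤ (Real.exp (q * t) - 1) / q := by
  rcases eq_or_lt_of_le ht with h | h
  · simp [← h]
  · have key := exp_secant (mul_pos hp h) (mul_le_mul_of_nonneg_right hpq h.le)
    have hqt : 0 < q := lt_of_lt_of_le hp hpq
    rw [div_le_div_iff₀ (mul_pos hp h) (mul_pos hqt h)] at key
    rw [div_le_div_iff₀ hp hqt]
    nlinarith [key, h]

theorem stmt_16 (x p q : ℝ) (hx0 : 0 < x) (hx1 : x ≤ 1)
    (hp : 0 < p) (hpq : p ≤ q) (hq : q ≤ 1) :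
    (1 / q) * (x ^ q - x / ((1 - q) * x + q)) ≤
      (1 / p) * (x ^ p - x / ((1 - p) * x + p)) := by
  have hq0 : 0 < q := lt_of_lt_of_le hp hpq
  set t : ℝ := -Real.log x with htdef
  have ht0 : 0 ≤ t := neg_nonneg.mpr (Real.log_nonpos hx0.le hx1)
  have hinv : ∀ r : ℝ, (x ^ r)⁻¹ = Real.exp (r * t) := by
    intro r
    rw [← Real.rpow_neg hx0.le, Real.rpow_def_of_pos hx0]
    ring_nf
    congr 1; rw [htdef]; ring
  have hD : ∀ r : ℝ, 0 < r → r ≤ 1 → 0 < (1 - r) * x + r := by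
    intro r hr hr1; nlinarith
  have hDpq : (1 - p) * x + p ≤ (1 - q) * x + q := by nlinarith
  have hxp : (0:ℝ) < x ^ p := Real.rpow_pos_of_pos hx0 p
  have hxq : (0:ℝ) < x ^ q := Real.rpow_pos_of_pos hx0 q
  have hxpq : x ^ q ≤ x ^ p := Real.rpow_le_rpow_of_exponent_ge hx0 hx1 hpq
  -- factorization identity
  have hid : ∀ r : ℝ, 0 < r → r ≤ 1 →
      (1 / r) * (x ^ r - x / ((1 - r) * x + r)) =
        (x ^ r * x / ((1 - r) * x + r)) * ((1/x - 1) + (1 - (x ^ r)⁻¹) / r) := by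
    intro r hr hr1
    have hDr := hD r hr hr1
    have hxr : (0:ℝ) < x ^ r := Real.rpow_pos_of_pos hx0 r
    field_simp
    have hne : x * (1 - r) + r ≠ 0 := by nlinarith
    field_simp
    ring
  -- f₂ values
  have f2q_le_f2p : ((1/x - 1) + (1 - (x ^ q)⁻¹) / q) ≤ ((1/x - 1) + (1 - (x ^ p)⁻¹) / p) := by
    have := g_mono ht0 hp hpq
    rw [hinv p, hinv q]
    have h1 : (1 - Real.exp (q*t)) / q ≤ (1 - Real.exp (p*t)) / p := by
      have e1 : (1 - Real.exp (q*t)) / q = -((Real.exp (q*t) - 1)/q) := by ring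
      have e2 : (1 - Real.exp (p*t)) / p = -((Real.exp (p*t) - 1)/p) := by ring
      rw [e1, e2]; linarith
    linarith
  have f2q_nonneg : 0 ≤ ((1/x - 1) + (1 - (x ^ q)⁻¹) / q) := by
    have h1 := g_mono ht0 hq0 hq
    rw [hinv q]
    have hx1t : Real.exp (1 * t) = 1/x := by
      rw [← hinv 1, Real.rpow_one, one_div]
    rw [one_mul] at hx1t
    have : (1 - Real.exp (q*t)) / q ≥ (1 - Real.exp t) / 1 := by
      have e1 : (1 - Real.exp (q*t)) / q = -((Real.exp (q*t) - 1)/q) := by ring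
      have e2 : (1 - Real.exp t) / 1 = -((Real.exp t - 1)/1) := by ring
      rw [e1, e2]
      have : (Real.exp (q*t) - 1)/q ≤ (Real.exp (1*t) - 1)/1 := g_mono ht0 hq0 hq
      rw [one_mul] at this
      linarith
    rw [hx1t] at this
    have hxne : x ≠ 0 := ne_of_gt hx0
    have : (1/x - 1) + (1 - Real.exp (q*t)) / q ≥ (1/x - 1) + (1 - 1/x) := by linarith
    linarith
  -- f₁ values
  have f1p_nonneg : 0 ≤ x ^ p * x / ((1 - p) * x + p) := by
    have := hD p hp (hpq.trans hq); positivity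
  have f1q_le_f1p : x ^ q * x / ((1 - q) * x + q) ≤ x ^ p * x / ((1 - p) * x + p) := by
    apply div_le_div₀ (by positivity) (by nlinarith) (hD p hp (hpq.trans hq)) hDpq
  rw [hid p hp (hpq.trans hq), hid q hq0 hq]
  calc x ^ q * x / ((1 - q) * x + q) * ((1/x - 1) + (1 - (x ^ q)⁻¹) / q)
      ≤ x ^ p * x / ((1 - p) * x + p) * ((1/x - 1) + (1 - (x ^ q)⁻¹) / q) :=
        mul_le_mul_of_nonneg_right f1q_le_f1p f2q_nonneg
    _ ≤ x ^ p * x / ((1 - p) * x + p) * ((1/x - 1) + (1 - (x ^ p)⁻¹) / p) :=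
        mul_le_mul_of_nonneg_left f2q_le_f2p f1p_nonneg
end

section
/- Define f(x,p) = (1/p)·(x^p − x/((1−p)x + p)) + p·(log x)² for x > 0 and p ∈ (0,1]. If x ≥ 1 and 0 < p ≤ q ≤ 1/2, then f(x,p) ≤ f(x,q). Likewise if 0 < x ≤ 1 and 1/2 ≤ p ≤ q ≤ 1, then f(x,p) ≤ f(x,q). -/
open Real

/-- Key inequality: for `y ≥ 1`, `2(y-1) ≤ (y+1) log y`. -/
lemma key_log_ineq (y : ℝ) (hy : 1 ≤ y) : 2 * (y - 1) ≤ (y + 1) * Real.log y := by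
  set φ : ℝ → ℝ := fun t => (t + 1) * Real.log t - 2 * (t - 1) with hφ
  have hmono : MonotoneOn φ (Set.Ici 1) := by
    apply monotoneOn_of_hasDerivWithinAt_nonneg (f' := fun t => Real.log t + 1 / t - 1)
      (convex_Ici 1)
    · apply ContinuousOn.sub
      · exact ContinuousOn.mul (by fun_prop) (Real.continuousOn_log.mono (by
          intro t ht; simp only [Set.mem_Ici] at ht
          simp only [Set.mem_compl_iff, Set.mem_singleton_iff]; linarith))
      · fun_prop
    · intro t ht
      rw [interior_Ici] at ht
      simp only [Set.mem_Ioi] at ht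
      have ht0 : (0 : ℝ) < t := by linarith
      have h1 := (((hasDerivAt_id t).add_const 1).mul (Real.hasDerivAt_log ht0.ne')).sub
          (((hasDerivAt_id t).sub_const 1).const_mul 2)
      simp only [id_eq] at h1
      have h2 : HasDerivAt φ (Real.log t + 1 / t - 1) t := by
        exact h1.congr_deriv (by field_simp; ring)
      rw [interior_Ici]
      exact h2.hasDerivWithinAt
    · intro t ht
      rw [interior_Ici] at ht
      simp only [Set.mem_Ioi] at ht
      have ht0 : (0 : ℝ) < t := by linarith
      have := Real.one_sub_inv_le_log_of_pos ht0
      have : 1 - 1 / t ≤ Real.log t := by rw [one_div]; exact this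
      linarith
  have h0 : φ 1 = 0 := by simp [hφ]
  have := hmono (Set.mem_Ici.mpr le_rfl) (Set.mem_Ici.mpr hy) hy
  rw [h0] at this
  simp only [hφ] at this
  linarith

/-- `|log x| ≥ 2|x-1|/(x+1)` in squared form pieces: for `0 < x`,
`(2(x-1)/(x+1))^2 ≤ (log x)^2`. -/
lemma key_log_sq (x : ℝ) (hx : 0 < x) :
    (2 * (x - 1) / (x + 1)) ^ 2 ≤ (Real.log x) ^ 2 := by
  have hx1 : (0:ℝ) < x + 1 := by linarith
  rcases le_or_gt 1 x with h1 | h1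
  · have hk := key_log_ineq x h1
    have h2 : 0 ≤ 2 * (x - 1) / (x + 1) := div_nonneg (by linarith) hx1.le
    have h3 : 2 * (x - 1) / (x + 1) ≤ Real.log x := by
      rw [div_le_iff₀ hx1]; linarith
    exact pow_le_pow_left₀ h2 h3 2
  · have hy : 1 ≤ 1 / x := (le_div_iff₀ hx).mpr (by linarith)
    have hk := key_log_ineq (1 / x) hy
    have hlog : Real.log (1 / x) = -Real.log x := by
      rw [one_div, Real.log_inv]
    rw [hlog] at hk
    -- hk : 2 * (1/x - 1) ≤ (1/x + 1) * (-log x)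
    have hk' : 2 * (1 - x) ≤ (1 + x) * (-Real.log x) := by
      have hmul := mul_le_mul_of_nonneg_left hk hx.le
      have e1 : x * (2 * (1 / x - 1)) = 2 * (1 - x) := by field_simp
      have e2 : x * ((1 / x + 1) * -Real.log x) = (1 + x) * -Real.log x := by
        field_simp
      rw [e1, e2] at hmul
      exact hmul
    have h3 : 2 * (1 - x) / (x + 1) ≤ -Real.log x := by
      rw [div_le_iff₀ hx1]
      linarith
    have h2 : 0 ≤ 2 * (1 - x) / (x + 1) := by
      apply div_nonneg; linarith; linarith
    have h4 := pow_le_pow_left₀ h2 h3 2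
    have e : (2 * (1 - x) / (x + 1)) ^ 2 = (2 * (x - 1) / (x + 1)) ^ 2 := by ring
    rw [e] at h4
    calc (2 * (x - 1) / (x + 1)) ^ 2 ≤ (-Real.log x) ^ 2 := h4
      _ = (Real.log x) ^ 2 := by ring

theorem stmt_19 (x p q : ℝ) (hx : 0 < x) (hp : 0 < p) (hpq : p ≤ q) (hq : q ≤ 1)
    (h : (1 ≤ x ∧ q ≤ 1 / 2) ∨ (x ≤ 1 ∧ 1 / 2 ≤ p)) :
    (1 / p) * (x ^ p - x / ((1 - p) * x + p)) + p * (Real.log x) ^ 2 ≤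
      (1 / q) * (x ^ q - x / ((1 - q) * x + q)) + q * (Real.log x) ^ 2 := by
  set L := Real.log x with hL
  -- denominators positive
  have hD : ∀ r : ℝ, 0 < r → r ≤ 1 → 0 < (1 - r) * x + r := by
    intro r hr hr1
    have : 0 ≤ (1 - r) * x := mul_nonneg (by linarith) hx.le
    linarith
  -- the auxiliary function
  set g : ℝ → ℝ := fun r => (x ^ r - 1) / r + (1 - x) / ((1 - r) * x + r) + r * L ^ 2 with hg
  -- rewrite both sides
  have hrew : ∀ r : ℝ, 0 < r → r ≤ 1 →
      (1 / r) * (x ^ r - x / ((1 - r) * x + r)) + r * L ^ 2 = g r := by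
    intro r hr hr1
    have hDr := hD r hr hr1
    simp only [hg]
    rw [div_add_div _ _ hr.ne' hDr.ne', div_add' _ _ _ (mul_pos hr hDr).ne', one_div_mul_eq_div,
      sub_div' hDr.ne', div_div, div_add' _ _ _ (mul_pos hDr hr).ne']
    congr 1 <;> ring
  have hq0 : 0 < q := lt_of_lt_of_le hp hpq
  rw [hrew p hp (hpq.trans hq), hrew q hq0 hq]
  -- g is monotone on [p, q]
  have hmono : MonotoneOn g (Set.Icc p q) := by
    apply monotoneOn_of_hasDerivWithinAt_nonneg
      (f' := fun r => (x ^ r * L * r - (x ^ r - 1)) / r ^ 2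
        - (1 - x) * (1 - x) / ((1 - r) * x + r) ^ 2 + L ^ 2)
      (convex_Icc p q)
    · -- continuity
      apply ContinuousOn.add
      apply ContinuousOn.add
      · have hcont : Continuous (fun r : ℝ => x ^ r) :=
          continuous_iff_continuousAt.mpr fun r => Real.continuousAt_const_rpow hx.ne'
        apply ContinuousOn.div
        · exact (hcont.continuousOn).sub continuousOn_const
        · fun_prop
        · intro r hr; exact (lt_of_lt_of_le hp hr.1).ne'
      · apply ContinuousOn.div continuousOn_const (by fun_prop)
        intro r hr
        exact (hD r (lt_of_lt_of_le hp hr.1) (hr.2.trans hq)).ne'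
      · fun_prop
    · -- derivative
      intro r hr
      rw [interior_Icc] at hr
      obtain ⟨hr1, hr2⟩ := hr
      have hr0 : 0 < r := hp.trans hr1
      have hr1' : r < 1 := lt_of_lt_of_le hr2 hq
      have hDr : 0 < (1 - r) * x + r := hD r hr0 (le_of_lt hr1')
      have hd : HasDerivAt g ((x ^ r * L * r - (x ^ r - 1)) / r ^ 2
          - (1 - x) * (1 - x) / ((1 - r) * x + r) ^ 2 + L ^ 2) r := by
        have h1 : HasDerivAt (fun r : ℝ => x ^ r) (x ^ r * L) r := by
          have := (hasDerivAt_const r x).rpow (hasDerivAt_id r) hx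
          simpa using this
        have h2 : HasDerivAt (fun r : ℝ => (x ^ r - 1) / r)
            (((x ^ r * L) * r - (x ^ r - 1) * 1) / r ^ 2) r :=
          (h1.sub_const 1).div (hasDerivAt_id r) hr0.ne'
        have h3 : HasDerivAt (fun r : ℝ => (1 - r) * x + r) (1 - x) r := by
          have : HasDerivAt (fun r : ℝ => (1 - r) * x + r) ((-1) * x + 1) r := by
            exact (((hasDerivAt_id r).const_sub 1).mul_const x).add (hasDerivAt_id r)
          simpa using this.congr_deriv (by ring)
        have h4 : HasDerivAt (fun r : ℝ => (1 - x) / ((1 - r) * x + r))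
            ((0 * ((1 - r) * x + r) - (1 - x) * (1 - x)) / ((1 - r) * x + r) ^ 2) r :=
          (hasDerivAt_const r (1 - x)).div h3 hDr.ne'
        have h5 : HasDerivAt (fun r : ℝ => r * L ^ 2) (L ^ 2) r := by
          simpa using (hasDerivAt_id r).mul_const (L ^ 2)
        have := (h2.add h4).add h5
        exact this.congr_deriv (by field_simp; ring)
      exact hd.hasDerivWithinAt
    · -- nonnegativity of derivative
      intro r hr
      rw [interior_Icc] at hr
      obtain ⟨hr1, hr2⟩ := hr
      have hr0 : 0 < r := hp.trans hr1
      have hr1' : r < 1 := lt_of_lt_of_le hr2 hq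
      have hDr : 0 < (1 - r) * x + r := hD r hr0 (le_of_lt hr1')
      -- first term nonneg
      have hT1 : 0 ≤ (x ^ r * L * r - (x ^ r - 1)) / r ^ 2 := by
        apply div_nonneg _ (sq_nonneg r)
        have hxr : (0:ℝ) < x ^ r := Real.rpow_pos_of_pos hx r
        have hexp : 1 - r * L ≤ x ^ (-r) := by
          have := Real.add_one_le_exp (-(r * L))
          have he : Real.exp (-(r * L)) = x ^ (-r) := by
            rw [Real.rpow_def_of_pos hx, hL]; ring_nf
          linarith [he ▸ this]
        have hmul := mul_le_mul_of_nonneg_left hexp hxr.le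
        have hxx : x ^ r * x ^ (-r) = 1 := by
          rw [← Real.rpow_add hx]; simp
        rw [hxx] at hmul
        nlinarith
      -- second: (1-x)^2 / D^2 ≤ L^2
      have hT2 : (1 - x) * (1 - x) / ((1 - r) * x + r) ^ 2 ≤ L ^ 2 := by
        have hhalf : (x + 1) / 2 ≤ (1 - r) * x + r := by
          rcases h with ⟨hx1, hq2⟩ | ⟨hx1, hp2⟩
          · have : r ≤ 1 / 2 := le_of_lt (lt_of_lt_of_le hr2 hq2)
            nlinarith
          · have : 1 / 2 ≤ r := le_of_lt (lt_of_le_of_lt hp2 hr1)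
            nlinarith
        have hx1 : (0:ℝ) < x + 1 := by linarith
        have hkey := key_log_sq x hx
        -- (1-x)^2/D^2 ≤ (1-x)^2/((x+1)/2)^2 = (2(x-1)/(x+1))^2 ≤ L^2
        have hDhalf : (0:ℝ) < (x + 1) / 2 := by linarith
        have h1 : (1 - x) * (1 - x) / ((1 - r) * x + r) ^ 2
            ≤ (1 - x) * (1 - x) / ((x + 1) / 2) ^ 2 := by
          apply div_le_div_of_nonneg_left (by nlinarith) (by positivity)
          nlinarith
        have h2 : (1 - x) * (1 - x) / ((x + 1) / 2) ^ 2 = (2 * (x - 1) / (x + 1)) ^ 2 := by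
          field_simp
          ring
        calc (1 - x) * (1 - x) / ((1 - r) * x + r) ^ 2
            ≤ (2 * (x - 1) / (x + 1)) ^ 2 := by rw [← h2]; exact h1
          _ ≤ L ^ 2 := hkey
      linarith
  exact hmono (Set.mem_Icc.mpr ⟨le_rfl, hpq⟩) (Set.mem_Icc.mpr ⟨hpq, le_rfl⟩) hpq
end
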